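/- (Saturation Lemma) Let Γ be a Λ-consistent set of formulas in language L. Then there exists a Λ-consistent set Γ₊ of formulas in the language L⁺ (L enlarged with countably many fresh variables) with Γ ⊆ Γ₊ such that Γ₊ has the ∀-property: for every formula φ and every variable x, there is a variable y with (φ(y/x) → ∀x φ) ∈ Γ₊. -/

import Mathlib

/-- The two sorts: agents and objects. -/
inductive Srt : Type | agt | obj
deriving DecidableEq

/-- Variables, tagged with a sort. -/
abbrev Var : Type := Srt × ℕ

/-- Terms: variables and constants, each tagged with a sort. -/
inductive Tm : Type
  | var : Var → Tm
  | con : Var → Tm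
deriving DecidableEq

/-- The sort of a term. -/
def Tm.srt : Tm → Srt
  | .var x => x.1
  | .con c => c.1

/-- Formulas of the two-sorted term-modal language. -/
inductive Fml : Type
  | rel : ℕ → List Tm → Fml
  | eq : Tm → Tm → Fml
  | neg : Fml → Fml
  | imp : Fml → Fml → Fml
  | all : Var → Fml → Fml
  | K : Tm → Fml → Fml
deriving DecidableEq

/-- Conjunction, defined from negation and implication. -/
def Fml.and (φ ψ : Fml) : Fml := Fml.neg (φ.imp ψ.neg)

/-- Substitute variable y for variable x in a term. -/
def Tm.substV (x y : Var) : Tm → Tm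
  | .var z => if z = x then .var y else .var z
  | .con c => .con c

/-- Substitute variable y for all free occurrences of x in a formula. -/
def Fml.substV (x y : Var) : Fml → Fml
  | .rel p ts => .rel p (ts.map (Tm.substV x y))
  | .eq t u => .eq (t.substV x y) (u.substV x y)
  | .neg φ => .neg (φ.substV x y)
  | .imp φ ψ => .imp (φ.substV x y) (ψ.substV x y)
  | .all z φ => if z = x then .all z φ else .all z (φ.substV x y)
  | .K t φ => .K (t.substV x y) (φ.substV x y)

/-- x occurs free in a formula. -/
def Fml.free (x : Var) : Fml → Prop
  | .rel _ ts => ∃ t ∈ ts, t = Tm.var x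
  | .eq t u => t = Tm.var x ∨ u = Tm.var x
  | .neg φ => φ.free x
  | .imp φ ψ => φ.free x ∨ ψ.free x
  | .all z φ => z ≠ x ∧ φ.free x
  | .K t φ => t = Tm.var x ∨ φ.free x

/-- y is free for x in φ (substituting y for free x causes no capture). -/
def freeFor (y x : Var) : Fml → Prop
  | .rel _ _ => True
  | .eq _ _ => True
  | .neg φ => freeFor y x φ
  | .imp φ ψ => freeFor y x φ ∧ freeFor y x ψ
  | .all z φ => z = x ∨ ((z = y → ¬ φ.free x) ∧ freeFor y x φ)
  | .K _ φ => freeFor y x φ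

/-- An assignment of truth values to formulas that is boolean-homomorphic on
negation and implication. -/
def BoolHom (b : Fml → Bool) : Prop :=
  (∀ φ, b (Fml.neg φ) = !b φ) ∧ (∀ φ ψ, b (Fml.imp φ ψ) = (!b φ || b ψ))

/-- Substitution instances of propositional tautologies: formulas true under
every assignment that is boolean-homomorphic on ¬ and →. -/
def Taut (φ : Fml) : Prop := ∀ b : Fml → Bool, BoolHom b → b φ = true

/-- Conjunction of a finite list of formulas (empty list gives a tautology). -/
def conjF : List Fml → Fml
  | [] => Fml.imp (Fml.rel 0 []) (Fml.rel 0 [])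
  | φ :: l => φ.and (conjF l)

/-- Γ ⊢_Λ φ : some finite conjunction of members of Γ provably implies φ in Λ. -/
def Deduces (Λ Γ : Set Fml) (φ : Fml) : Prop :=
  ∃ l : List Fml, (∀ ψ ∈ l, ψ ∈ Γ) ∧ Fml.imp (conjF l) φ ∈ Λ

/-- Γ is Λ-consistent: no contradiction φ ∧ ¬φ is deducible from Γ. -/
def Consistent (Λ Γ : Set Fml) : Prop := ¬ ∃ φ : Fml, Deduces Λ Γ (φ.and φ.neg)

/-- Maximally Λ-consistent set. -/
def MaxConsistent (Λ Γ : Set Fml) : Prop :=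
  Consistent Λ Γ ∧ ∀ Δ : Set Fml, Γ ⊂ Δ → ¬ Consistent Λ Δ

/-- x occurs (free or bound) in a formula. -/
def Fml.occurs (x : Var) : Fml → Prop
  | .rel _ ts => ∃ t ∈ ts, t = Tm.var x
  | .eq t u => t = Tm.var x ∨ u = Tm.var x
  | .neg φ => φ.occurs x
  | .imp φ ψ => φ.occurs x ∨ ψ.occurs x
  | .all z φ => z = x ∨ φ.occurs x
  | .K t φ => t = Tm.var x ∨ φ.occurs x

/-- The variables of the original language L: the even-indexed variables of
each sort.  The full language L⁺ adds the (infinitely many, of each sort)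
odd-indexed fresh variables. -/
def OldVar : Set Var := {x : Var | x.2 % 2 = 0}

/-- φ is a formula of the language with variables drawn from S. -/
def InLang (S : Set Var) (φ : Fml) : Prop := ∀ x : Var, φ.occurs x → x ∈ S

/-- Γ₊ has the ∀-property: for every formula φ and variable x there is a
variable y (of the same sort) with (φ(y/x) → ∀x φ) ∈ Γ₊. -/
def ForallProp (Γ : Set Fml) : Prop :=
  ∀ (φ : Fml) (x : Var), ∃ y : Var, y.1 = x.1 ∧
    Fml.imp (φ.substV x y) (Fml.all x φ) ∈ Γ


/-! ### Auxiliary development for the saturation lemma -/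

namespace SaturationAux

def srtEquiv : Srt ≃ Bool where
  toFun s := match s with | .agt => false | .obj => true
  invFun b := match b with | false => .agt | true => .obj
  left_inv s := by cases s <;> rfl
  right_inv b := by cases b <;> rfl

instance : Encodable Srt := Encodable.ofEquiv _ srtEquiv

def tmEquiv : Tm ≃ (Var ⊕ Var) where
  toFun t := match t with | .var x => .inl x | .con c => .inr c
  invFun s := match s with | .inl x => .var x | .inr c => .con c
  left_inv t := by cases t <;> rfl
  right_inv s := by cases s <;> rfl

instance : Encodable Tm := Encodable.ofEquiv _ tmEquiv

/-- An injective encoding of formulas into ℕ. -/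
def enc : Fml → ℕ
  | .rel n ts => Nat.pair 0 (Nat.pair n (Encodable.encode ts))
  | .eq t u => Nat.pair 1 (Nat.pair (Encodable.encode t) (Encodable.encode u))
  | .neg φ => Nat.pair 2 (enc φ)
  | .imp φ ψ => Nat.pair 3 (Nat.pair (enc φ) (enc ψ))
  | .all z φ => Nat.pair 4 (Nat.pair (Encodable.encode z) (enc φ))
  | .K t φ => Nat.pair 5 (Nat.pair (Encodable.encode t) (enc φ))

theorem enc_inj : Function.Injective enc := by
  intro φ ψ h
  induction φ generalizing ψ with
  | rel n ts =>
      cases ψ <;> simp [enc, Nat.pair_eq_pair, Encodable.encode_inj] at h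
      obtain ⟨rfl, rfl⟩ := h; rfl
  | eq t u =>
      cases ψ <;> simp [enc, Nat.pair_eq_pair, Encodable.encode_inj] at h
      obtain ⟨rfl, rfl⟩ := h; rfl
  | neg φ ih =>
      cases ψ <;> simp [enc, Nat.pair_eq_pair] at h
      rw [ih h]
  | imp φ χ ih1 ih2 =>
      cases ψ <;> simp [enc, Nat.pair_eq_pair] at h
      rw [ih1 h.1, ih2 h.2]
  | all z φ ih =>
      cases ψ <;> simp [enc, Nat.pair_eq_pair, Encodable.encode_inj] at h
      obtain ⟨rfl, h⟩ := h; rw [ih h]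
  | K t φ ih =>
      cases ψ <;> simp [enc, Nat.pair_eq_pair, Encodable.encode_inj] at h
      obtain ⟨rfl, h⟩ := h; rw [ih h]

instance : Countable Fml := ⟨⟨enc, enc_inj⟩⟩

instance : Nonempty Fml := ⟨.rel 0 []⟩
instance : Nonempty Srt := ⟨.agt⟩

/-! ### Index bounds -/

def tIdx : Tm → ℕ
  | .var x => x.2
  | .con _ => 0

def mIdx : Fml → ℕ
  | .rel _ ts => (ts.map tIdx).foldr max 0
  | .eq t u => max (tIdx t) (tIdx u)
  | .neg φ => mIdx φ
  | .imp φ ψ => max (mIdx φ) (mIdx ψ)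
  | .all z φ => max z.2 (mIdx φ)
  | .K t φ => max (tIdx t) (mIdx φ)

lemma mem_foldr_max (a : ℕ) : ∀ l : List ℕ, a ∈ l → a ≤ l.foldr max 0
  | x :: l, h => by
      rcases List.mem_cons.mp h with rfl | h
      · exact le_max_left _ _
      · exact le_trans (mem_foldr_max a l h) (le_max_right _ _)

lemma occurs_le (v : Var) (φ : Fml) (h : φ.occurs v) : v.2 ≤ mIdx φ := by
  induction φ with
  | rel n ts =>
      obtain ⟨t, ht, rfl⟩ := h
      exact mem_foldr_max _ _ (List.mem_map_of_mem (f := tIdx) ht)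
  | eq t u =>
      rcases h with rfl | rfl
      · exact le_max_left _ _
      · exact le_max_right _ _
  | neg φ ih => exact ih h
  | imp φ ψ ih1 ih2 =>
      rcases h with h | h
      · exact le_trans (ih1 h) (le_max_left _ _)
      · exact le_trans (ih2 h) (le_max_right _ _)
  | all z φ ih =>
      rcases h with rfl | h
      · exact le_max_left _ _
      · exact le_trans (ih h) (le_max_right _ _)
  | K t φ ih =>
      rcases h with rfl | h
      · exact le_max_left _ _
      · exact le_trans (ih h) (le_max_right _ _)

lemma tsub_var (x y v : Var) (t : Tm) (h : Tm.substV x y t = Tm.var v) :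
    t = Tm.var v ∨ v = y := by
  cases t with
  | var z =>
      by_cases hz : z = x
      · simp [Tm.substV, hz] at h
        exact Or.inr h.symm
      · simp [Tm.substV, hz] at h
        exact Or.inl (by rw [h])
  | con c => simp [Tm.substV] at h

lemma sub_occ (x y v : Var) (φ : Fml) (h : (Fml.substV x y φ).occurs v) :
    φ.occurs v ∨ v = y := by
  induction φ with
  | rel n ts =>
      obtain ⟨t, ht, heq⟩ := h
      obtain ⟨t0, ht0, rfl⟩ := List.mem_map.mp ht
      rcases tsub_var x y v t0 heq with h | h
      · exact Or.inl ⟨t0, ht0, h⟩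
      · exact Or.inr h
  | eq t u =>
      rcases h with h | h
      · rcases tsub_var x y v t h with h | h
        · exact Or.inl (Or.inl h)
        · exact Or.inr h
      · rcases tsub_var x y v u h with h | h
        · exact Or.inl (Or.inr h)
        · exact Or.inr h
  | neg φ ih =>
      rcases ih h with h | h
      · exact Or.inl h
      · exact Or.inr h
  | imp φ ψ ih1 ih2 =>
      rcases h with h | h
      · rcases ih1 h with h | h
        · exact Or.inl (Or.inl h)
        · exact Or.inr h
      · rcases ih2 h with h | h
        · exact Or.inl (Or.inr h)
        · exact Or.inr h
  | all z φ ih =>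
      by_cases hz : z = x
      · rw [Fml.substV, if_pos hz] at h
        exact Or.inl h
      · rw [Fml.substV, if_neg hz] at h
        rcases h with h | h
        · exact Or.inl (Or.inl h)
        · rcases ih h with h | h
          · exact Or.inl (Or.inr h)
          · exact Or.inr h
  | K t φ ih =>
      rcases h with h | h
      · rcases tsub_var x y v t h with h | h
        · exact Or.inl (Or.inl h)
        · exact Or.inr h
      · rcases ih h with h | h
        · exact Or.inl (Or.inr h)
        · exact Or.inr h

lemma free_occ (v : Var) (φ : Fml) (h : φ.free v) : φ.occurs v := by
  induction φ with
  | rel n ts => exact h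
  | eq t u => exact h
  | neg φ ih => exact ih h
  | imp φ ψ ih1 ih2 =>
      rcases h with h | h
      · exact Or.inl (ih1 h)
      · exact Or.inr (ih2 h)
  | all z φ ih => exact Or.inr (ih h.2)
  | K t φ ih =>
      rcases h with h | h
      · exact Or.inl h
      · exact Or.inr (ih h)

lemma conj_occ (v : Var) : ∀ l : List Fml, (conjF l).occurs v → ∃ ψ ∈ l, ψ.occurs v
  | [], h => by
      rcases h with (⟨t, ht, _⟩ | ⟨t, ht, _⟩) <;> simp_all
  | φ :: l, h => by
      rcases h with h | h
      · exact ⟨φ, List.mem_cons_self, h⟩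
      · obtain ⟨ψ, hψ, hocc⟩ := conj_occ v l h
        exact ⟨ψ, List.mem_cons_of_mem _ hψ, hocc⟩

/-! ### Boolean lemmas -/

lemma bool_and_false (b : Fml → Bool) (hb : BoolHom b) (θ : Fml) :
    b (θ.and θ.neg) = false := by
  simp only [Fml.and, hb.1, hb.2]
  cases b θ <;> rfl

lemma conj_true (b : Fml → Bool) (hb : BoolHom b) :
    ∀ l : List Fml, (b (conjF l) = true ↔ ∀ ψ ∈ l, b ψ = true)
  | [] => by
      show b (Fml.imp _ _) = true ↔ _
      rw [hb.2]
      simp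
  | φ :: l => by
      have hstep : b (conjF (φ :: l)) = (b φ && b (conjF l)) := by
        show b (Fml.neg (φ.imp (conjF l).neg)) = _
        rw [hb.1, hb.2, hb.1]
        cases b φ <;> cases b (conjF l) <;> rfl
      rw [hstep, Bool.and_eq_true, conj_true b hb l]
      simp

lemma taut_filter (l l' : List Fml) (χ θ : Fml) (h : ∀ ψ ∈ l, ψ = χ ∨ ψ ∈ l') :
    Taut (Fml.imp (Fml.imp (conjF l) (θ.and θ.neg))
      (Fml.imp (conjF l') (Fml.neg χ))) := by
  intro b hb
  rw [hb.2, hb.2, hb.2, hb.1, bool_and_false b hb θ]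
  by_cases hl : b (conjF l) = true
  · rw [hl]; rfl
  · rw [Bool.not_eq_true] at hl
    rw [hl]
    by_cases hl' : b (conjF l') = true
    · by_cases hχ : b χ = true
      · exfalso
        apply absurd ((conj_true b hb l).mpr ?_) (by rw [hl]; simp)
        intro ψ hψ
        rcases h ψ hψ with rfl | hmem
        · exact hχ
        · exact (conj_true b hb l').mp hl' ψ hmem
      · rw [Bool.not_eq_true] at hχ
        rw [hχ, hl']
        rfl
    · rw [Bool.not_eq_true] at hl'
      rw [hl']
      rfl

lemma taut_antecedent (P A C : Fml) :
    Taut (Fml.imp (Fml.imp P (Fml.neg (Fml.imp A C))) (Fml.imp P A)) := by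
  intro b hb
  simp only [hb.1, hb.2]
  cases b P <;> cases b A <;> cases b C <;> rfl

lemma taut_consequent (P A C : Fml) :
    Taut (Fml.imp (Fml.imp P (Fml.neg (Fml.imp A C)))
      (Fml.imp P (Fml.neg C))) := by
  intro b hb
  simp only [hb.1, hb.2]
  cases b P <;> cases b A <;> cases b C <;> rfl

lemma taut_trans (P Q R : Fml) :
    Taut (Fml.imp (Fml.imp P Q) (Fml.imp (Fml.imp Q R) (Fml.imp P R))) := by
  intro b hb
  simp only [hb.1, hb.2]
  cases b P <;> cases b Q <;> cases b R <;> rfl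

lemma taut_combine (P C : Fml) :
    Taut (Fml.imp (Fml.imp P C) (Fml.imp (Fml.imp P (Fml.neg C))
      (Fml.imp P (C.and C.neg)))) := by
  intro b hb
  simp only [Fml.and, hb.1, hb.2]
  cases b P <;> cases b C <;> rfl

/-! ### The stage construction -/

/-- Bound on the indices of all variables used before stage `n`. -/
def stB (f : ℕ → Fml × Var) : ℕ → ℕ
  | 0 => 0
  | n + 1 => 2 * max (mIdx (f n).1) (max (f n).2.2 (stB f n)) + 2

/-- Bound at stage `n` itself. -/
def stM (f : ℕ → Fml × Var) (n : ℕ) : ℕ :=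
  max (mIdx (f n).1) (max (f n).2.2 (stB f n))

/-- The fresh witness variable for stage `n`: odd index, larger than anything
seen so far. -/
def wit (f : ℕ → Fml × Var) (n : ℕ) : Var := ((f n).2.1, 2 * stM f n + 1)

/-- The witnessing formula added at stage `n`. -/
def chi (f : ℕ → Fml × Var) (n : ℕ) : Fml :=
  Fml.imp ((f n).1.substV (f n).2 (wit f n)) (Fml.all (f n).2 (f n).1)

/-- The set after `n` stages. -/
def Gam (Γ : Set Fml) (f : ℕ → Fml × Var) (n : ℕ) : Set Fml :=
  Γ ∪ {ψ | ∃ m < n, ψ = chi f m}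

lemma stB_succ (f : ℕ → Fml × Var) (n : ℕ) :
    stB f (n + 1) = 2 * stM f n + 2 := rfl

lemma stB_le_stM (f : ℕ → Fml × Var) (n : ℕ) : stB f n ≤ stM f n :=
  le_trans (le_max_right _ _) (le_max_right _ _)

lemma stB_mono (f : ℕ → Fml × Var) {m n : ℕ} (h : m ≤ n) :
    stB f m ≤ stB f n := by
  induction n with
  | zero => simp_all
  | succ n ih =>
      by_cases hmn : m ≤ n
      · have h1 : stB f m ≤ stB f n := ih hmn
        have h2 : stB f n ≤ stM f n := stB_le_stM f n
        rw [stB_succ]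
        omega
      · have hm : m = n + 1 := by omega
        subst hm
        exact le_refl _

lemma chi_occ_le (f : ℕ → Fml × Var) (m : ℕ) (v : Var)
    (h : (chi f m).occurs v) : v.2 ≤ 2 * stM f m + 1 := by
  have hφ : mIdx (f m).1 ≤ stM f m := le_max_left _ _
  have hx : (f m).2.2 ≤ stM f m := le_trans (le_max_left _ _) (le_max_right _ _)
  rcases h with h | h
  · rcases sub_occ _ _ _ _ h with h | rfl
    · have := occurs_le v _ h; omega
    · exact le_refl _
  · rcases h with h | h
    · rw [← h]; omega
    · have := occurs_le v _ h; omega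

lemma gam_mono (Γ : Set Fml) (f : ℕ → Fml × Var) {m n : ℕ} (h : m ≤ n) :
    Gam Γ f m ⊆ Gam Γ f n := by
  rintro ψ (hψ | ⟨k, hk, rfl⟩)
  · exact Or.inl hψ
  · exact Or.inr ⟨k, lt_of_lt_of_le hk h, rfl⟩

lemma cons_mono {Λ Γ Δ : Set Fml} (h : Γ ⊆ Δ) (hc : Consistent Λ Δ) :
    Consistent Λ Γ := by
  rintro ⟨θ, l, hl, hΛ⟩
  exact hc ⟨θ, l, fun ψ hψ => h (hl ψ hψ), hΛ⟩

end SaturationAux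

open SaturationAux

/-- Saturation Lemma: every Λ-consistent set Γ of L-formulas
extends to a Λ-consistent set Γ₊ of L⁺-formulas with the ∀-property.
Λ is assumed to contain all substitution instances of propositional
tautologies, to be closed under modus ponens and the rule Gen, and to contain
the alphabetic-variant implications ∀y φ(y/x) → ∀x φ for fresh y. -/
theorem saturation (Λ : Set Fml)
    (taut : ∀ φ, Taut φ → φ ∈ Λ)
    (mp : ∀ φ ψ : Fml, Fml.imp φ ψ ∈ Λ → φ ∈ Λ → ψ ∈ Λ)
    (gen : ∀ (φ ψ : Fml) (x : Var), ¬ φ.free x →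
      Fml.imp φ ψ ∈ Λ → Fml.imp φ (Fml.all x ψ) ∈ Λ)
    (alpha : ∀ (φ : Fml) (x y : Var), y.1 = x.1 → ¬ φ.occurs y →
      Fml.imp (Fml.all y (φ.substV x y)) (Fml.all x φ) ∈ Λ)
    (Γ : Set Fml) (hΓL : ∀ φ ∈ Γ, InLang OldVar φ)
    (hcons : Consistent Λ Γ) :
    ∃ Γp : Set Fml, Γ ⊆ Γp ∧ Consistent Λ Γp ∧ ForallProp Γp := by
  classical
  obtain ⟨f, hf⟩ := exists_surjective_nat (Fml × Var)
  -- every variable occurring in `Gam Γ f n` is old or has index `< stB f n`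
  have gam_occ : ∀ (n : ℕ) (ψ : Fml), ψ ∈ Gam Γ f n → ∀ v : Var, ψ.occurs v →
      v.2 % 2 = 0 ∨ v.2 < stB f n := by
    rintro n ψ (hψ | ⟨m, hm, rfl⟩) v hv
    · exact Or.inl (hΓL ψ hψ v hv)
    · right
      have h1 := chi_occ_le f m v hv
      have h2 : v.2 < stB f (m + 1) := by rw [stB_succ]; omega
      exact lt_of_lt_of_le h2 (stB_mono f hm)
  -- the witness of stage n is fresh for `Gam Γ f n`
  have wit_fresh : ∀ (n : ℕ) (ψ : Fml), ψ ∈ Gam Γ f n → ¬ ψ.occurs (wit f n) := by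
    intro n ψ hψ hocc
    have hB : stB f n ≤ stM f n := stB_le_stM f n
    rcases gam_occ n ψ hψ _ hocc with h | h
    · simp only [wit] at h; omega
    · simp only [wit] at h; omega
  -- the witness of stage n does not occur in the formula of stage n
  have wit_notin : ∀ n : ℕ, ¬ (f n).1.occurs (wit f n) := by
    intro n hocc
    have h1 := occurs_le (wit f n) _ hocc
    have h2 : mIdx (f n).1 ≤ stM f n := le_max_left _ _
    simp only [wit] at h1
    omega
  -- every stage is consistent
  have key : ∀ n : ℕ, Consistent Λ (Gam Γ f n) := by
    intro n
    induction n with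
    | zero =>
        apply cons_mono _ hcons
        rintro ψ (hψ | ⟨m, hm, _⟩)
        · exact hψ
        · exact absurd hm (Nat.not_lt_zero m)
    | succ n ih =>
        rintro ⟨θ, l, hl, hΛl⟩
        set A : Fml := (f n).1.substV (f n).2 (wit f n) with hA
        set C : Fml := Fml.all (f n).2 (f n).1 with hC
        have hchi : chi f n = Fml.imp A C := rfl
        set l' : List Fml := l.filter (fun ψ => ψ ≠ chi f n) with hl'def
        have hcover : ∀ ψ ∈ l, ψ = chi f n ∨ ψ ∈ l' := by
          intro ψ hψ
          by_cases h : ψ = chi f n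
          · exact Or.inl h
          · exact Or.inr (List.mem_filter.mpr ⟨hψ, by simpa using h⟩)
        have hl'mem : ∀ ψ ∈ l', ψ ∈ Gam Γ f n := by
          intro ψ hψ
          have h1 := List.mem_filter.mp hψ
          have h2 : ψ ≠ chi f n := by simpa using h1.2
          rcases hl ψ h1.1 with hψΓ | ⟨m, hm, rfl⟩
          · exact Or.inl hψΓ
          · refine Or.inr ⟨m, ?_, rfl⟩
            rcases Nat.lt_succ_iff_lt_or_eq.mp hm with h | rfl
            · exact h
            · exact absurd rfl h2
        have h1 : Fml.imp (conjF l') (Fml.neg (chi f n)) ∈ Λ :=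
          mp _ _ (taut _ (taut_filter l l' (chi f n) θ hcover)) hΛl
        rw [hchi] at h1
        have h2 : Fml.imp (conjF l') A ∈ Λ :=
          mp _ _ (taut _ (taut_antecedent (conjF l') A C)) h1
        have h3 : Fml.imp (conjF l') (Fml.neg C) ∈ Λ :=
          mp _ _ (taut _ (taut_consequent (conjF l') A C)) h1
        have hyfree : ¬ (conjF l').free (wit f n) := by
          intro hfr
          obtain ⟨ψ, hψ, hocc⟩ := conj_occ (wit f n) l' (free_occ _ _ hfr)
          exact wit_fresh n ψ (hl'mem ψ hψ) hocc
        have h4 : Fml.imp (conjF l') (Fml.all (wit f n) A) ∈ Λ :=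
          gen _ _ _ hyfree h2
        have h5 : Fml.imp (Fml.all (wit f n) A) C ∈ Λ :=
          alpha (f n).1 (f n).2 (wit f n) rfl (wit_notin n)
        have h6 : Fml.imp (conjF l') C ∈ Λ :=
          mp _ _ (mp _ _ (taut _ (taut_trans (conjF l') (Fml.all (wit f n) A) C)) h4) h5
        have h7 : Fml.imp (conjF l') (C.and C.neg) ∈ Λ :=
          mp _ _ (mp _ _ (taut _ (taut_combine (conjF l') C)) h6) h3
        exact ih ⟨C, l', hl'mem, h7⟩
  refine ⟨Γ ∪ {ψ | ∃ m : ℕ, ψ = chi f m}, fun ψ hψ => Or.inl hψ, ?_, ?_⟩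
  · -- consistency of the union
    rintro ⟨θ, l, hl, hΛl⟩
    have hsome : ∀ l : List Fml,
        (∀ ψ ∈ l, ψ ∈ Γ ∪ {ψ | ∃ m : ℕ, ψ = chi f m}) →
        ∃ n : ℕ, ∀ ψ ∈ l, ψ ∈ Gam Γ f n := by
      intro l
      induction l with
      | nil => exact fun _ => ⟨0, fun ψ h => absurd h List.not_mem_nil⟩
      | cons ψ l ihl =>
          intro hmem
          obtain ⟨n1, hn1⟩ := ihl fun χ hχ => hmem χ (List.mem_cons_of_mem _ hχ)
          have hψ2 : ∃ n2 : ℕ, ψ ∈ Gam Γ f n2 := by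
            rcases hmem ψ List.mem_cons_self with h | ⟨m, rfl⟩
            · exact ⟨0, Or.inl h⟩
            · exact ⟨m + 1, Or.inr ⟨m, Nat.lt_succ_self m, rfl⟩⟩
          obtain ⟨n2, hn2⟩ := hψ2
          refine ⟨max n1 n2, ?_⟩
          intro χ hχ
          rcases List.mem_cons.mp hχ with rfl | hχ
          · exact gam_mono Γ f (le_max_right _ _) hn2
          · exact gam_mono Γ f (le_max_left _ _) (hn1 χ hχ)
    obtain ⟨n, hn⟩ := hsome l hl
    exact key n ⟨θ, l, hn, hΛl⟩
  · -- the ∀-property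
    intro φ x
    obtain ⟨n, hn⟩ := hf (φ, x)
    refine ⟨wit f n, ?_, ?_⟩
    · show (f n).2.1 = x.1
      rw [hn]
    · refine Or.inr ⟨n, ?_⟩
      simp only [chi, hn]
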